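/- Consider tournament selection with tournament size μ over a population of size μ ≥ 3 sorted by non-increasing diversity contribution, and suppose among the top three ranked individuals there is a good individual. Then the probability of selecting a good individual is at least (1 − (1 − 1/(μ−2))^{μ}) · (1 − 2/μ)^{μ} ≥ (1 − 1/e) · (0.19)², a constant independent of μ. -/

import Mathlib

noncomputable section
open scoped ENNReal
attribute [local instance] Classical.propDecidable

namespace EMO


/-- A bit string of length `n`. -/
abbrev BitString (n : ℕ) := Fin n → Bool

/-- Number of one-bits. -/
def onesCount {n : ℕ} (x : BitString n) : ℕ :=
  (Finset.univ.filter fun i => x i = true).card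

def allOnes (n : ℕ) : BitString n := fun _ => true
def allZeros (n : ℕ) : BitString n := fun _ => false

/-- The bi-objective function OneMinMax. -/
def OneMinMax {n : ℕ} (x : BitString n) : ℤ × ℤ :=
  ((onesCount x : ℤ), (n : ℤ) - (onesCount x : ℤ))

/-- Number of leading ones. -/
def leadingOnes {n : ℕ} (x : BitString n) : ℕ :=
  (Finset.univ.filter fun i : Fin n => ∀ j : Fin n, j ≤ i → x j = true).card

/-- Number of trailing zeros. -/
def trailingZeros {n : ℕ} (x : BitString n) : ℕ :=
  (Finset.univ.filter fun i : Fin n => ∀ j : Fin n, i ≤ j → x j = false).card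

/-- The bi-objective function LOTZ. -/
def LOTZ {n : ℕ} (x : BitString n) : ℤ × ℤ :=
  ((leadingOnes x : ℤ), (trailingZeros x : ℤ))

/-- `y` dominates `x` (maximisation). -/
def dominates {n : ℕ} (f : BitString n → ℤ × ℤ) (y x : BitString n) : Prop :=
  (f x).1 ≤ (f y).1 ∧ (f x).2 ≤ (f y).2 ∧ f x ≠ f y

/-- `y` weakly dominates `x` (maximisation). -/
def weaklyDominates {n : ℕ} (f : BitString n → ℤ × ℤ) (y x : BitString n) : Prop :=
  (f x).1 ≤ (f y).1 ∧ (f x).2 ≤ (f y).2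

/-- Pareto optimality. -/
def paretoOptimal {n : ℕ} (f : BitString n → ℤ × ℤ) (x : BitString n) : Prop :=
  ¬ ∃ y : BitString n, dominates f y x

/-- A population of mutually non-dominated points. -/
def mutuallyNonDominated {n : ℕ} (f : BitString n → ℤ × ℤ)
    (P : Finset (BitString n)) : Prop :=
  ∀ x ∈ P, ∀ y ∈ P, ¬ dominates f y x

/-- Flip bit `i` of `x`. -/
def flipBit {n : ℕ} (x : BitString n) (i : Fin n) : BitString n :=
  Function.update x i (!x i)

/-- `y` is a Hamming neighbour of `x`. -/
def hammingNeighbour {n : ℕ} (x y : BitString n) : Prop :=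
  ∃ i : Fin n, y = flipBit x i

/-- `x` is good relative to population `P`: it is Pareto optimal and has a Pareto-optimal
Hamming neighbour whose objective vector is not attained by any member of `P`. -/
def isGood {n : ℕ} (f : BitString n → ℤ × ℤ) (P : Finset (BitString n))
    (x : BitString n) : Prop :=
  paretoOptimal f x ∧
    ∃ y : BitString n, hammingNeighbour x y ∧ paretoOptimal f y ∧ ∀ z ∈ P, f z ≠ f y

/-- `x` is bad relative to population `P`. -/
def isBad {n : ℕ} (f : BitString n → ℤ × ℤ) (P : Finset (BitString n))
    (x : BitString n) : Prop :=
  paretoOptimal f x ∧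
    ¬ ∃ y : BitString n, hammingNeighbour x y ∧ paretoOptimal f y ∧ ∀ z ∈ P, f z ≠ f y

/-- `P` covers the whole Pareto front of `f`. -/
def coversFront {n : ℕ} (f : BitString n → ℤ × ℤ) (P : Finset (BitString n)) : Prop :=
  ∀ x : BitString n, paretoOptimal f x → ∃ z ∈ P, f z = f x

/-- The hypervolume contribution of `x` to `P` (for a population of mutually
non-dominated points, with reference point `r`). -/
def HVC {n : ℕ} (f : BitString n → ℤ × ℤ) (r : ℤ × ℤ) (x : BitString n)
    (P : Finset (BitString n)) : ℤ :=
  ((f x).1 - (((P.filter fun z => (f z).1 < (f x).1).image fun z => (f z).1).max.unbotD r.1)) *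
  ((f x).2 - (((P.filter fun z => (f z).2 < (f x).2).image fun z => (f z).2).max.unbotD r.2))

/-- Crowding distance of `x` in `P` with respect to a single objective `g`: infinite for the
boundary points, and otherwise the normalised difference between successor and predecessor. -/
def CDCobj {n : ℕ} (g : BitString n → ℤ) (x : BitString n)
    (P : Finset (BitString n)) : ℝ≥0∞ :=
  if (∀ z ∈ P, g x ≤ g z) ∨ (∀ z ∈ P, g z ≤ g x) then ⊤
  else
    (((((P.filter fun z => g x < g z).image g).min.untopD 0 -
        (((P.filter fun z => g z < g x).image g).max.unbotD 0)).toNat : ℝ≥0∞)) /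
      ((((P.image g).max.unbotD 0 - ((P.image g).min.untopD 0)).toNat : ℝ≥0∞))

/-- The crowding distance contribution of `x` to `P`. -/
def CDC {n : ℕ} (f : BitString n → ℤ × ℤ) (x : BitString n)
    (P : Finset (BitString n)) : ℝ≥0∞ :=
  CDCobj (fun z => (f z).1) x P + CDCobj (fun z => (f z).2) x P

/-- A diversity measure `c` is diversity-favouring on `S`. -/
def diversityFavouring {n : ℕ} {α : Type*} [Preorder α] (f : BitString n → ℤ × ℤ)
    (c : BitString n → Finset (BitString n) → α) (S : Set (BitString n)) : Prop :=
  ∀ P : Finset (BitString n), mutuallyNonDominated f P →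
    ∀ x ∈ P, ∀ y ∈ P, x ∈ S → y ∈ S → isBad f P x → isGood f P y → c x P < c y P

/-- The default bit string (used only to make selection kernels total). -/
def defaultBS (n : ℕ) : BitString n := fun _ => false

/-- Local mutation: flip a single uniformly random bit. -/
def localMutation {n : ℕ} (hn : 0 < n) (x : BitString n) : PMF (BitString n) :=
  haveI : Nonempty (Fin n) := ⟨⟨0, hn⟩⟩
  (PMF.uniformOfFintype (Fin n)).map (flipBit x)

/-- A Bernoulli coin with success probability `1/n` (for `n ≥ 1`). -/
def bitFlipCoin (n : ℕ) : PMF Bool :=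
  PMF.bernoulli (min ((n : ℝ≥0∞))⁻¹ 1).toNNReal
    (le_trans (ENNReal.toNNReal_mono ENNReal.one_ne_top (min_le_right _ _)) ENNReal.toNNReal_one.le)

/-- Global (standard bit) mutation: flip each bit independently with probability `1/n`. -/
def globalMutationAux {n : ℕ} : List (Fin n) → BitString n → PMF (BitString n)
  | [], x => PMF.pure x
  | i :: is, x => (bitFlipCoin n).bind fun b =>
      globalMutationAux is (if b then flipBit x i else x)

def globalMutation {n : ℕ} (x : BitString n) : PMF (BitString n) :=
  globalMutationAux (List.finRange n) x

/-- Survival selection: if `s'` is not dominated by any member of `P`, add `s'` to `P` and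
remove all members weakly dominated by `s'`. -/
def updatePop {n : ℕ} (f : BitString n → ℤ × ℤ) (P : Finset (BitString n))
    (s' : BitString n) : Finset (BitString n) :=
  if ∃ z ∈ P, dominates f z s' then P
  else insert s' (P.filter fun z => ¬ weaklyDominates f s' z)

/-- One iteration of (G)SEMO with parent-selection kernel `select` and mutation `mutate`. -/
def step {n : ℕ} (f : BitString n → ℤ × ℤ)
    (select : Finset (BitString n) → PMF (BitString n))
    (mutate : BitString n → PMF (BitString n))
    (P : Finset (BitString n)) : PMF (Finset (BitString n)) :=
  (select P).bind fun s => (mutate s).map fun s' => updatePop f P s'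

/-- The L-dominant attribute `L(x) = LO(x) + TZ(x)`. -/
def Ldom {n : ℕ} (x : BitString n) : ℕ := leadingOnes x + trailingZeros x

/-- The subpopulation of points with maximum L-dominant attribute. -/
def maxLSub {n : ℕ} (P : Finset (BitString n)) : Finset (BitString n) :=
  P.filter fun x => ∀ z ∈ P, Ldom z ≤ Ldom x

/-- One iteration of the modified GSEMO: parent selection (and the diversity contribution)
is restricted to the subpopulation of points with maximum L-dominant attribute. -/
def stepMod {n : ℕ} (f : BitString n → ℤ × ℤ)
    (select : Finset (BitString n) → PMF (BitString n))
    (mutate : BitString n → PMF (BitString n))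
    (P : Finset (BitString n)) : PMF (Finset (BitString n)) :=
  (select (maxLSub P)).bind fun s => (mutate s).map fun s' => updatePop f P s'

/-- Initial population: a single uniformly random bit string. -/
def initDist (n : ℕ) : PMF (Finset (BitString n)) :=
  (PMF.uniformOfFintype (BitString n)).map fun x => {x}

/-- Distribution of the population after `t` iterations. -/
def stateDist {S : Type*} (init : PMF S) (st : S → PMF S) : ℕ → PMF S
  | 0 => init
  | t + 1 => (stateDist init st t).bind st

/-- Expected number of iterations until an (absorbing) goal predicate is reached,
expressed as `∑ₜ Pr[goal not yet reached at time t]`. -/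
def expectedRuntime {S : Type*} (init : PMF S) (st : S → PMF S) (goal : S → Prop) : ℝ≥0∞ :=
  ∑' t : ℕ, (stateDist init st t).toOuterMeasure {s | ¬ goal s}

/-- Uniform parent selection. -/
def uniformSelect {n : ℕ} (P : Finset (BitString n)) : PMF (BitString n) :=
  if h : P.Nonempty then PMF.uniformOfFinset P h else PMF.pure (defaultBS n)

/-- Highest Diversity Contribution (HDC) parent selection: select an individual with
maximum diversity contribution, ties broken uniformly at random. -/
def HDCSelect {n : ℕ} {α : Type*} [LinearOrder α]
    (c : BitString n → Finset (BitString n) → α)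
    (P : Finset (BitString n)) : PMF (BitString n) :=
  if h : P.Nonempty then
    PMF.uniformOfFinset (P.filter fun x => ∀ y ∈ P, c y P ≤ c x P)
      (by
        obtain ⟨b, hb, hmax⟩ := P.exists_max_image (fun x => c x P) h
        exact ⟨b, Finset.mem_filter.mpr ⟨hb, hmax⟩⟩)
  else PMF.pure (defaultBS n)

/-- Non-Minimum Uniform at Random (NMUAR) parent selection: select uniformly at random
among all individuals whose diversity contribution is not minimal (from the whole
population if all contributions are equal). -/
def NMUARSelect {n : ℕ} {α : Type*} [LinearOrder α]
    (c : BitString n → Finset (BitString n) → α)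
    (P : Finset (BitString n)) : PMF (BitString n) :=
  if h : P.Nonempty then
    if hQ : (P.filter fun x => ∃ y ∈ P, c y P < c x P).Nonempty then
      PMF.uniformOfFinset _ hQ
    else PMF.uniformOfFinset P h
  else PMF.pure (defaultBS n)

/-- Tournament selection with tournament size `μ = |P|`: draw `μ` individuals uniformly at
random with replacement from `P` and select one with the highest diversity contribution
among the drawn multiset (ties broken uniformly at random). -/
def tournamentSelect {n : ℕ} {α : Type*} [LinearOrder α]
    (c : BitString n → Finset (BitString n) → α)
    (P : Finset (BitString n)) : PMF (BitString n) :=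
  if h : P.Nonempty then
    haveI : Nonempty {x // x ∈ P} := h.to_subtype
    (PMF.uniformOfFintype (Fin P.card → {x // x ∈ P})).bind fun g =>
      PMF.uniformOfFinset
        ((Finset.univ.image fun i => ((g i : {x // x ∈ P}) : BitString n)).filter fun x =>
          ∀ y ∈ Finset.univ.image fun i => ((g i : {x // x ∈ P}) : BitString n), c y P ≤ c x P)
        (by
          have hne : (Finset.univ.image fun i => ((g i : {x // x ∈ P}) : BitString n)).Nonempty := by
            refine ⟨(g ⟨0, Finset.card_pos.mpr h⟩ : {x // x ∈ P}), ?_⟩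
            exact Finset.mem_image.mpr ⟨⟨0, Finset.card_pos.mpr h⟩, Finset.mem_univ _, rfl⟩
          obtain ⟨b, hb, hmax⟩ :=
            Finset.exists_max_image _ (fun x => c x P) hne
          exact ⟨b, Finset.mem_filter.mpr ⟨hb, hmax⟩⟩)
  else PMF.pure (defaultBS n)

/-- Exponential ranking scheme: probability of selecting the `i`-th ranked individual
(1-indexed) in a population of size `μ`. -/
def rExp (i μ : ℕ) : ℝ≥0∞ :=
  (2 : ℝ≥0∞)⁻¹ ^ i / ∑ j ∈ Finset.Icc 1 μ, (2 : ℝ≥0∞)⁻¹ ^ j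

/-- Power-law ranking scheme. -/
def rPow (i μ : ℕ) : ℝ≥0∞ :=
  ((i : ℝ≥0∞) ^ 2)⁻¹ / ∑ j ∈ Finset.Icc 1 μ, ((j : ℝ≥0∞) ^ 2)⁻¹

/-- Harmonic ranking scheme. -/
def rHarm (i μ : ℕ) : ℝ≥0∞ :=
  (i : ℝ≥0∞)⁻¹ / ∑ j ∈ Finset.Icc 1 μ, (j : ℝ≥0∞)⁻¹


/-- `select` implements a rank-based parent-selection scheme with rank probabilities
`r i μ` (1-indexed rank `i`, population size `μ`) with respect to the diversity
contribution `c`, for some non-increasing ordering of the population by `c`. -/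
def implementsRankScheme {n : ℕ} {α : Type*} [Preorder α]
    (c : BitString n → Finset (BitString n) → α) (r : ℕ → ℕ → ℝ≥0∞)
    (select : Finset (BitString n) → PMF (BitString n)) : Prop :=
  ∀ P : Finset (BitString n), P.Nonempty →
    ∃ l : List (BitString n), l.Nodup ∧ l.toFinset = P ∧
      l.Chain' (fun a b => c b P ≤ c a P) ∧
      (∀ i : Fin l.length, select P (l.get i) = r (i.val + 1) P.card) ∧
      (∀ x : BitString n, x ∉ P → select P x = 0)

/-- The Pareto-optimal point `1^i 0^(n-i)` of LOTZ. -/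
def opt (n i : ℕ) : BitString n := fun t => decide ((t : ℕ) < i)

/-- The whole Pareto set of LOTZ as a population. -/
def frontSet (n : ℕ) : Finset (BitString n) := (Finset.range (n + 1)).image (opt n)

/-- `P` has a gap at position `i`. -/
def hasGapAt {n : ℕ} (P : Finset (BitString n)) (i : ℕ) : Prop :=
  opt n i ∉ P ∧ (∃ j, j < i ∧ opt n j ∈ P) ∧ (∃ k, i < k ∧ k ≤ n ∧ opt n k ∈ P)

/-- `P` has a gap at some position `i` with `n/4 ≤ i ≤ 3n/4`. -/
def gapInRange (n : ℕ) (P : Finset (BitString n)) : Prop :=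
  ∃ i : ℕ, n ≤ 4 * i ∧ 4 * i ≤ 3 * n ∧ hasGapAt P i

/-- `P` contains both `0^n` and `1^n`. -/
def bothExtremes (n : ℕ) (P : Finset (BitString n)) : Prop :=
  allZeros n ∈ P ∧ allOnes n ∈ P

/-- The chain stopped (frozen) as soon as `cond` holds. -/
def stopWhen {S : Type*} (cond : S → Prop) (st : S → PMF S) (s : S) : PMF S :=
  if cond s then PMF.pure s else st s



lemma key_eq (μ : ℕ) (hμ : 3 ≤ μ) :
    (1 - (1 - 1 / ((μ : ℝ) - 2)) ^ μ) * (1 - 2 / (μ : ℝ)) ^ μ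
      = (((μ-2)^μ - (μ-3)^μ : ℕ) : ℝ) / ((μ:ℝ))^μ := by
  have hle : (μ-3)^μ ≤ (μ-2)^μ := Nat.pow_le_pow_left (by omega) μ
  have h2 : ((μ-2:ℕ):ℝ) = (μ:ℝ) - 2 := by
    push_cast [Nat.cast_sub (show 2 ≤ μ by omega)]; ring
  have h3 : ((μ-3:ℕ):ℝ) = (μ:ℝ) - 3 := by
    push_cast [Nat.cast_sub (show 3 ≤ μ by omega)]; ring
  rw [Nat.cast_sub hle]
  push_cast [h2, h3]
  have hR : (3:ℝ) ≤ μ := by exact_mod_cast hμ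
  have hμ0 : (μ:ℝ) ≠ 0 := by positivity
  have hμ2 : (μ:ℝ) - 2 ≠ 0 := by nlinarith
  have e1 : 1 - 1/((μ:ℝ)-2) = ((μ:ℝ)-3)/((μ:ℝ)-2) := by
    rw [eq_div_iff hμ2, sub_mul, one_div, inv_mul_cancel₀ hμ2]; ring
  have e2 : 1 - 2/(μ:ℝ) = ((μ:ℝ)-2)/(μ:ℝ) := by
    rw [eq_div_iff hμ0, sub_mul, div_mul_cancel₀ _ hμ0]; ring
  have hB : ((μ:ℝ)-2)^μ ≠ 0 := pow_ne_zero _ hμ2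
  rw [e1, e2, div_pow, div_pow]
  field_simp

lemma factor1 (μ : ℕ) (hμ : 3 ≤ μ) :
    1 - Real.exp (-1) ≤ 1 - (1 - 1 / ((μ : ℝ) - 2)) ^ μ := by
  have hR : (3:ℝ) ≤ μ := by exact_mod_cast hμ
  set t : ℝ := 1 / ((μ:ℝ) - 2) with ht
  have hd : (1:ℝ) ≤ (μ:ℝ) - 2 := by linarith
  have htpos : 0 < t := by rw [ht]; positivity
  have ht1 : t ≤ 1 := by
    rw [ht, div_le_one (by linarith)]; linarith
  have h1 : (1 - t) ^ μ ≤ Real.exp (-t) ^ μ := by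
    apply pow_le_pow_left₀ (by linarith)
    linarith [Real.add_one_le_exp (-t)]
  have h2 : Real.exp (-t) ^ μ = Real.exp ((μ:ℝ) * (-t)) := by
    rw [← Real.exp_nat_mul]
  have h3 : Real.exp ((μ:ℝ) * (-t)) ≤ Real.exp (-1) := by
    apply Real.exp_le_exp.mpr
    have : (1:ℝ) ≤ (μ:ℝ) * t := by
      rw [ht, mul_one_div, le_div_iff₀ (by linarith)]; linarith
    nlinarith
  nlinarith [h1, h2.le, h3]

lemma factor2 (μ : ℕ) (hμ : 3 ≤ μ) :
    (0.19:ℝ) ^ 2 ≤ (1 - 2 / (μ : ℝ)) ^ μ := by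
  by_cases h5 : μ ≤ 5
  · interval_cases μ <;> norm_num
  · have h6 : 6 ≤ μ := by omega
    have hR : (6:ℝ) ≤ μ := by exact_mod_cast h6
    have hsub : (0:ℝ) < (μ:ℝ) - 2 := by linarith
    have hstep : Real.exp (-(2 / ((μ:ℝ) - 2))) ≤ 1 - 2 / (μ:ℝ) := by
      have he : 1 + 2/((μ:ℝ)-2) ≤ Real.exp (2/((μ:ℝ)-2)) := by
        linarith [Real.add_one_le_exp (2/((μ:ℝ)-2))]
      have hb : (μ:ℝ)/((μ:ℝ)-2) ≤ Real.exp (2/((μ:ℝ)-2)) := by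
        have heq2 : (μ:ℝ)/((μ:ℝ)-2) = 1 + 2/((μ:ℝ)-2) := by field_simp; ring
        rw [heq2]; exact he
      have hbpos : (0:ℝ) < (μ:ℝ)/((μ:ℝ)-2) := by positivity
      have := inv_anti₀ hbpos hb
      rw [Real.exp_neg]
      calc (Real.exp (2/((μ:ℝ)-2)))⁻¹ ≤ ((μ:ℝ)/((μ:ℝ)-2))⁻¹ := this
        _ = 1 - 2/(μ:ℝ) := by rw [inv_div]; field_simp
    have hpow : Real.exp (-(2 / ((μ:ℝ) - 2))) ^ μ ≤ (1 - 2 / (μ:ℝ)) ^ μ :=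
      pow_le_pow_left₀ (Real.exp_nonneg _) hstep μ
    have heq : Real.exp (-(2 / ((μ:ℝ) - 2))) ^ μ
        = Real.exp ((μ:ℝ) * (-(2 / ((μ:ℝ) - 2)))) := by rw [← Real.exp_nat_mul]
    have h3' : Real.exp (-3) ≤ Real.exp ((μ:ℝ) * (-(2 / ((μ:ℝ) - 2)))) := by
      apply Real.exp_le_exp.mpr
      have : (μ:ℝ) * (2 / ((μ:ℝ) - 2)) ≤ 3 := by
        rw [mul_div_assoc', div_le_iff₀ hsub]; nlinarith
      nlinarith
    have hexp3 : Real.exp 3 ≤ 27.7 := by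
      have h1 : Real.exp 3 = Real.exp 1 ^ 3 := by
        rw [← Real.exp_nat_mul]; norm_num
      rw [h1]
      calc Real.exp 1 ^ 3 ≤ 2.7182818286 ^ 3 := by
            gcongr <;> first | exact Real.exp_one_lt_d9.le | exact Real.exp_nonneg 1
        _ ≤ 27.7 := by norm_num
    have hfinal : (0.19:ℝ)^2 ≤ Real.exp (-3) := by
      rw [Real.exp_neg]
      have : (27.7:ℝ)⁻¹ ≤ (Real.exp 3)⁻¹ := inv_anti₀ (Real.exp_pos 3) hexp3
      nlinarith
    calc (0.19:ℝ)^2 ≤ Real.exp (-3) := hfinal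
      _ ≤ Real.exp ((μ:ℝ) * (-(2 / ((μ:ℝ) - 2)))) := h3'
      _ = Real.exp (-(2 / ((μ:ℝ) - 2))) ^ μ := heq.symm
      _ ≤ (1 - 2 / (μ:ℝ)) ^ μ := hpow


open Finset in

lemma tournament_aux (μ : ℕ) (hμ : 3 ≤ μ)
    (G : Finset (Fin μ)) (hG : ∃ i ∈ G, (i : ℕ) < 3) :
    letI : Nonempty (Fin μ) := ⟨⟨0, Nat.lt_of_lt_of_le (by norm_num) hμ⟩⟩
    (ENNReal.ofReal ((1 - (1 - 1 / ((μ : ℝ) - 2)) ^ μ) * (1 - 2 / (μ : ℝ)) ^ μ) ≤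
      ((PMF.uniformOfFintype (Fin μ → Fin μ)).map fun g =>
          (Finset.univ.image g).min.untopD ⟨0, Nat.lt_of_lt_of_le (by norm_num) hμ⟩).toOuterMeasure ↑G) := by
  letI : Nonempty (Fin μ) := ⟨⟨0, by omega⟩⟩
  obtain ⟨i, hiG, hi3⟩ := hG
  set d : Fin μ := ⟨0, by omega⟩ with hd
  set f : (Fin μ → Fin μ) → Fin μ := fun g => (Finset.univ.image g).min.untopD d with hf
  -- the two "other" top-3 ranks
  set A : Finset (Fin μ) := univ.filter (fun j : Fin μ => (j:ℕ) < 3 ∧ j ≠ i) with hA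
  set T : Finset (Fin μ) := Aᶜ with hT
  set T' : Finset (Fin μ) := T \ {i} with hT'
  have hiT : i ∈ T := by
    simp [hT, hA]
  have hAcard : A.card = 2 := by
    have h1 : A = (univ.filter (fun j : Fin μ => (j:ℕ) < 3)) \ {i} := by
      ext j; simp [hA, and_comm]
    have h2 : (univ.filter (fun j : Fin μ => (j:ℕ) < 3)) = {(⟨0, by omega⟩ : Fin μ), ⟨1, by omega⟩, ⟨2, by omega⟩} := by
      ext j; simp [Fin.ext_iff]; omega
    have hi' : i ∈ univ.filter (fun j : Fin μ => (j:ℕ) < 3) := by simp [hi3]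
    rw [h1, card_sdiff_of_subset (by simpa using hi'), h2]
    rw [card_insert_of_notMem (by simp [Fin.ext_iff]), card_insert_of_notMem (by simp [Fin.ext_iff])]
    simp
  have hTcard : T.card = μ - 2 := by
    rw [hT, card_compl, hAcard]; simp
  have hT'card : T'.card = μ - 3 := by
    rw [hT', card_sdiff_of_subset (by simpa using hiT), hTcard, card_singleton]; omega
  set E : Finset (Fin μ → Fin μ) :=
    (Fintype.piFinset fun _ : Fin μ => T) \ (Fintype.piFinset fun _ : Fin μ => T') with hE
  have hEcard : E.card = (μ-2)^μ - (μ-3)^μ := by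
    rw [hE, card_sdiff_of_subset (Fintype.piFinset_subset _ _ (fun a => sdiff_subset))]
    simp only [Fintype.card_piFinset, prod_const, card_univ, Fintype.card_fin, hTcard, hT'card]
    rw [← hT', hT'card]
  -- inclusion of events
  have hincl : (E : Set (Fin μ → Fin μ)) ⊆ f ⁻¹' ↑G := by
    intro g hg
    simp only [hE, coe_sdiff, Set.mem_diff, mem_coe, Fintype.mem_piFinset] at hg
    obtain ⟨hgT, hgT'⟩ := hg
    push_neg at hgT'
    obtain ⟨j0, hj0⟩ := hgT'
    have hgj0 : g j0 = i := by
      have := hgT j0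
      rw [hT'] at hj0
      simp only [mem_sdiff, mem_singleton] at hj0
      tauto
    have hne : (univ.image g).Nonempty := ⟨g j0, mem_image.mpr ⟨j0, mem_univ _, rfl⟩⟩
    have hmin : (univ.image g).min = ((univ.image g).min' hne : Fin μ) := (Finset.coe_min' hne).symm
    have hfg : f g = (univ.image g).min' hne := by
      show WithTop.untopD d (univ.image g).min = (univ.image g).min' hne
      rw [hmin]; rfl
    set m := (univ.image g).min' hne with hm
    have hmmem : m ∈ univ.image g := Finset.min'_mem _ _
    obtain ⟨j1, _, hj1⟩ := mem_image.mp hmmem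
    have hmT : m ∈ T := hj1 ▸ hgT j1
    have hmle : m ≤ i := Finset.min'_le _ _ (hgj0 ▸ mem_image.mpr ⟨j0, mem_univ _, rfl⟩)
    have hm3 : (m:ℕ) < 3 := lt_of_le_of_lt hmle hi3
    have hmi : m = i := by
      by_contra hne'
      have : m ∈ A := by simp [hA, hm3, hne']
      rw [hT] at hmT
      simp only [Finset.mem_compl] at hmT
      exact hmT this
    show f g ∈ ↑G
    rw [hfg, hmi]
    exact hiG
  -- measure computation
  rw [PMF.toOuterMeasure_map_apply]
  refine le_trans ?_ (MeasureTheory.measure_mono (μ := (PMF.uniformOfFintype (Fin μ → Fin μ)).toOuterMeasure) hincl)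
  rw [PMF.toOuterMeasure_apply_finset]
  have hval : ∑ x ∈ E, (PMF.uniformOfFintype (Fin μ → Fin μ)) x
      = ((((μ-2)^μ - (μ-3)^μ : ℕ)) : ℝ≥0∞) / ((μ:ℝ≥0∞) ^ μ) := by
    simp only [PMF.uniformOfFintype_apply]
    rw [Finset.sum_const, nsmul_eq_mul, hEcard]
    rw [Fintype.card_fun, Fintype.card_fin]
    rw [div_eq_mul_inv]
    push_cast
    ring
  rw [hval, key_eq μ hμ]
  apply le_of_eq
  rw [ENNReal.ofReal_div_of_pos (by positivity)]
  congr 1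
  · exact ENNReal.ofReal_natCast _
  · rw [ENNReal.ofReal_pow (by positivity), ENNReal.ofReal_natCast]

/-- Tournament selection with tournament size μ (μ ≥ 3): identify the
population with the ranks `Fin μ` (rank 0 = highest diversity contribution); the
tournament draws μ ranks uniformly at random with replacement and the smallest drawn
rank wins. If a good individual is among the top three ranks (`G` is the set of good
ranks), then a good individual is selected with probability at least
`(1 − (1 − 1/(μ−2))^μ)·(1 − 2/μ)^μ ≥ (1 − 1/e)·(0.19)²`. -/
theorem tournament_selection_good (μ : ℕ) (hμ : 3 ≤ μ)
    (G : Finset (Fin μ)) (hG : ∃ i ∈ G, (i : ℕ) < 3) :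
    letI : Nonempty (Fin μ) := ⟨⟨0, by omega⟩⟩
    (ENNReal.ofReal ((1 - (1 - 1 / ((μ : ℝ) - 2)) ^ μ) * (1 - 2 / (μ : ℝ)) ^ μ) ≤
      ((PMF.uniformOfFintype (Fin μ → Fin μ)).map fun g =>
          (Finset.univ.image g).min.untopD ⟨0, by omega⟩).toOuterMeasure ↑G) ∧
    (1 - Real.exp (-1)) * (0.19 : ℝ) ^ 2 ≤
      (1 - (1 - 1 / ((μ : ℝ) - 2)) ^ μ) * (1 - 2 / (μ : ℝ)) ^ μ := by
  refine ⟨tournament_aux μ hμ G hG, ?_⟩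
  have h1 := factor1 μ hμ
  have h2 := factor2 μ hμ
  have h0 : 0 ≤ 1 - Real.exp (-1) := by
    have := Real.exp_le_exp.mpr (show (-1:ℝ) ≤ 0 by norm_num)
    simp only [Real.exp_zero] at this
    linarith
  exact mul_le_mul h1 h2 (by positivity) (le_trans h0 h1)

end EMO
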